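/- Let f : [a,b] → ℝ be weakly decreasing with f(a) = f_a and f(b) = f_b, f_b ≤ f_a. Then for every v ∈ (f_b(b-a), f_a(b-a)) there exists such a weakly decreasing function f with ∫_a^b f = v; hence the set of attainable integrals is an interval containing (f_b(b-a), f_a(b-a)). -/

import Mathlib

/-- Sharpness of the nonparametric bounds on integrated demand: any value
strictly between the rectangle bounds is attained by some weakly decreasing
function with the prescribed endpoint values. -/
theorem stmt14 (a b fa fb : ℝ) (hab : a < b) (hff : fb ≤ fa) :
    ∀ v ∈ Set.Ioo (fb * (b - a)) (fa * (b - a)),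
      ∃ f : ℝ → ℝ, AntitoneOn f (Set.Icc a b) ∧ f a = fa ∧ f b = fb ∧
        (∫ t in a..b, f t) = v := by
  rintro v ⟨hv1, hv2⟩
  have hba : (0:ℝ) < b - a := by linarith
  have hfab : fb < fa := by
    by_contra h
    push_neg at h
    have : fa = fb := le_antisymm h hff
    rw [this] at hv2; linarith
  have hd : (0:ℝ) < fa - fb := by linarith
  obtain ⟨c, hc⟩ : ∃ c : ℝ, c = a + (v - fb * (b - a)) / (fa - fb) := ⟨_, rfl⟩
  have hac : a < c := by
    rw [hc]
    have : 0 < (v - fb * (b - a)) / (fa - fb) := div_pos (by linarith) hd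
    linarith
  have hcb : c < b := by
    rw [hc]
    have h1 : (v - fb * (b - a)) / (fa - fb) < b - a := by
      rw [div_lt_iff₀ hd]; nlinarith
    linarith
  have hca : (c - a) * (fa - fb) = v - fb * (b - a) := by
    rw [hc]; field_simp; ring
  refine ⟨fun t => if t ≤ c then fa else fb, ?_, by simp [hac.le], by
    simp [not_le.mpr hcb], ?_⟩
  · intro x hx y hy hxy
    by_cases hxc : x ≤ c
    · by_cases hyc : y ≤ c <;> simp [hxc, hyc, hff]
    · have hyc : ¬ y ≤ c := fun h => hxc (hxy.trans h)
      simp [hxc, hyc]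
  · have h1 : (∫ t in a..c, (if t ≤ c then fa else fb)) = fa * (c - a) := by
      rw [intervalIntegral.integral_congr (g := fun _ => fa), intervalIntegral.integral_const]
      · simp [smul_eq_mul, mul_comm]
      · intro t ht
        rw [Set.uIcc_of_le hac.le] at ht
        simp [ht.2]
    have h2 : (∫ t in c..b, (if t ≤ c then fa else fb)) = fb * (b - c) := by
      rw [intervalIntegral.integral_congr_ae (g := fun _ => fb), intervalIntegral.integral_const]
      · simp [smul_eq_mul, mul_comm]
      · filter_upwards with t ht
        rw [Set.uIoc_of_le hcb.le] at ht
        simp [not_le.mpr ht.1]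
    have hi1 : IntervalIntegrable (fun t => if t ≤ c then fa else fb)
        MeasureTheory.volume a c := by
      apply (intervalIntegrable_const (c := fa)).congr_ae
      rw [Filter.EventuallyEq, MeasureTheory.ae_restrict_iff' measurableSet_uIoc]
      filter_upwards with t ht
      rw [Set.uIoc_of_le hac.le] at ht
      simp [ht.2]
    have hi2 : IntervalIntegrable (fun t => if t ≤ c then fa else fb)
        MeasureTheory.volume c b := by
      apply (intervalIntegrable_const (c := fb)).congr_ae
      rw [Filter.EventuallyEq, MeasureTheory.ae_restrict_iff' measurableSet_uIoc]
      filter_upwards with t ht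
      rw [Set.uIoc_of_le hcb.le] at ht
      simp [not_le.mpr ht.1]
    rw [← intervalIntegral.integral_add_adjacent_intervals hi1 hi2, h1, h2]
    nlinarith
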